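/- Assume (q, n) is admissible and (q − 1)/(p − 1) divides n. Fix a generator s of S, let d be the permutation v ↦ sv of F, let c be the Frobenius permutation v ↦ v^p of F, and let H_0 be the subgroup of the symmetric group on F generated by c and d (a group of order ne). Then every element of order n in H_0 is a power of d. -/

import Mathlib

open Finset

lemma aux_pred_mul_geom (p m : ℕ) (hp : 1 ≤ p) :
    (p - 1) * ∑ l ∈ range m, p ^ l = p ^ m - 1 := by
  induction m with
  | zero => simp
  | succ m ih =>
    rw [Finset.sum_range_succ, Nat.mul_add, ih, Nat.sub_mul, one_mul, pow_succ]
    have h1 : 1 ≤ p ^ m := Nat.one_le_pow _ _ (by omega)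
    have h2 : p ^ m ≤ p * p ^ m := Nat.le_mul_of_pos_left _ (by omega)
    have h3 : p * p ^ m = p ^ m * p := by ring
    omega

lemma aux_geom_factor (p a b : ℕ) :
    ∑ k ∈ range (a * b), p ^ k
      = (∑ l ∈ range b, p ^ (a * l)) * ∑ t ∈ range a, p ^ t := by
  induction b with
  | zero => simp
  | succ b ih =>
    have hab : a * (b + 1) = a * b + a := by ring
    rw [hab, Finset.sum_range_add, ih, Finset.sum_range_succ, Nat.add_mul]
    congr 1
    rw [Finset.mul_sum]
    refine Finset.sum_congr rfl fun t _ => ?_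
    rw [← pow_add]

lemma aux_two_pow (m : ℕ) (hm : 2 ≤ m) : m + 2 ≤ 2 ^ m := by
  induction m with
  | zero => omega
  | succ m ih =>
    have h2 : 2 ^ (m + 1) = 2 * 2 ^ m := by rw [pow_succ]; ring
    rcases Nat.lt_or_ge m 2 with h | h
    · have : 4 ≤ 2 ^ 2 := by norm_num
      interval_cases m
      · omega
      · norm_num
    · have := ih h
      omega

lemma aux_sum_pow_coprime {R : Type*} [CommRing R] (y : R) (m u : ℕ) (hm : 1 < m)
    (hy : y ^ m = 1) (hu : Nat.Coprime u m) :
    ∑ l ∈ range m, y ^ (u * l) = ∑ l ∈ range m, y ^ l := by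
  have hred : ∀ a : ℕ, y ^ a = y ^ (a % m) := by
    intro a
    conv_lhs => rw [← Nat.div_add_mod a m]
    rw [pow_add, pow_mul, hy, one_pow, one_mul]
  obtain ⟨v, -, hv⟩ := Nat.exists_mul_mod_eq_one_of_coprime hu hm
  have key : ∀ (a b l : ℕ), a * b % m = 1 → l < m → a * (b * l % m) % m = l := by
    intro a b l hab hl
    have h1 : a * (b * l % m) ≡ a * (b * l) [MOD m] :=
      Nat.ModEq.mul_left a (Nat.mod_modEq (b * l) m)
    have h2 : a * (b * l) = (a * b) * l := by ring
    have h3 : (a * b) * l ≡ 1 * l [MOD m] := by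
      refine Nat.ModEq.mul_right l ?_
      show a * b % m = 1 % m
      rw [hab, Nat.mod_eq_of_lt hm]
    have h4 : a * (b * l % m) ≡ l [MOD m] := by
      calc a * (b * l % m) ≡ a * (b * l) [MOD m] := h1
        _ = (a * b) * l := h2
        _ ≡ 1 * l [MOD m] := h3
        _ = l := one_mul l
    calc a * (b * l % m) % m = l % m := h4
      _ = l := Nat.mod_eq_of_lt hl
  calc ∑ l ∈ range m, y ^ (u * l) = ∑ l ∈ range m, y ^ (u * l % m) := by
        refine Finset.sum_congr rfl fun l _ => hred _
    _ = ∑ l ∈ range m, y ^ l := by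
        refine Finset.sum_nbij' (fun l => u * l % m) (fun l => v * l % m) ?_ ?_ ?_ ?_ ?_
        · intro a _; exact Finset.mem_range.mpr (Nat.mod_lt _ (by omega))
        · intro a _; exact Finset.mem_range.mpr (Nat.mod_lt _ (by omega))
        · intro a ha
          exact key v u a (by rwa [Nat.mul_comm u v] at hv) (Finset.mem_range.mp ha)
        · intro a ha
          exact key u v a hv (Finset.mem_range.mp ha)
        · intro a _; rfl



/-- Let `p` be prime, `e ≥ 1`, `q = p^e`, `F` a finite field with `q`
elements, `n` a divisor of `q - 1` (even if `p` is odd), and `S` the subgroup of order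
`n` of `Fˣ`.  Assume `(q, n)` is admissible (i.e. `e` is the least `i ≥ 1` with
`p^i ≡ 1 (mod n)`) and that `(q - 1)/(p - 1)` divides `n`.  Fix a generator `s` of `S`,
let `d : v ↦ s v` and `c : v ↦ v^p` be the corresponding permutations of `F`, and let
`H₀` be the subgroup of the symmetric group on `F` generated by `c` and `d`.  Then every
element of order `n` in `H₀` is a power of `d`. -/
theorem order_n_elements_of_H0_are_powers_of_d
    (p e n : ℕ) (hp : p.Prime) (he : 1 ≤ e)
    (F : Type) [Field F] [Fintype F] (hq : Fintype.card F = p ^ e)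
    (hn : n ∣ p ^ e - 1) (hpar : Odd p → Even n)
    (S : Subgroup Fˣ) (hS : Nat.card S = n)
    (hadm : IsLeast {i : ℕ | 1 ≤ i ∧ p ^ i ≡ 1 [MOD n]} e)
    (hdvd : (p ^ e - 1) / (p - 1) ∣ n)
    (s : Fˣ) (hs : Subgroup.zpowers s = S)
    (c d : Equiv.Perm F)
    (hc : ∀ v : F, c v = v ^ p)
    (hd : ∀ v : F, d v = (s : F) * v) :
    ∀ g ∈ Subgroup.closure ({c, d} : Set (Equiv.Perm F)),
      orderOf g = n → ∃ k : ℕ, g = d ^ k := by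
  have hn0 : 0 < n := by rw [← hS]; exact Nat.card_pos
  have hp2 : 2 ≤ p := hp.two_le
  have hsord : orderOf s = n := by rw [← Nat.card_zpowers, hs, hS]
  -- power formulas
  have hdpow : ∀ (k : ℕ) (v : F), (d ^ k) v = (s : F) ^ k * v := by
    intro k
    induction k with
    | zero => intro v; simp
    | succ k ih =>
      intro v
      rw [pow_succ, Equiv.Perm.mul_apply, hd, ih, pow_succ]
      ring
  have hcpow : ∀ (k : ℕ) (v : F), (c ^ k) v = v ^ p ^ k := by
    intro k
    induction k with
    | zero => intro v; simp
    | succ k ih =>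
      intro v
      rw [pow_succ, Equiv.Perm.mul_apply, hc, ih, ← pow_mul, pow_succ]
      ring_nf
  have hdord : orderOf d = n := by
    rw [← hsord]
    rw [orderOf_eq_orderOf_iff]
    intro k
    constructor
    · intro h
      have h1 : (d ^ k) 1 = 1 := by rw [h]; rfl
      rw [hdpow, mul_one] at h1
      ext
      rw [Units.val_pow_eq_pow_val, h1, Units.val_one]
    · intro h
      ext v
      rw [hdpow, ← Units.val_pow_eq_pow_val, h, Units.val_one, one_mul,
        Equiv.Perm.one_apply]
  have hdn : d ^ n = 1 := by rw [← hdord]; exact pow_orderOf_eq_one d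
  have hce : c ^ e = 1 := by
    ext v
    rw [hcpow, ← hq, FiniteField.pow_card, Equiv.Perm.one_apply]
  -- mixing relation
  have hmix : ∀ (a b : ℕ), c ^ b * d ^ a = d ^ (a * p ^ b) * c ^ b := by
    intro a b
    ext v
    rw [Equiv.Perm.mul_apply, Equiv.Perm.mul_apply, hdpow, hcpow, hcpow, hdpow,
      mul_pow, ← pow_mul]
  -- normal form for products
  have hform : ∀ (i j k : ℕ),
      (d ^ i * c ^ j) ^ k = d ^ (i * ∑ l ∈ range k, p ^ (j * l)) * c ^ (j * k) := by
    intro i j k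
    induction k with
    | zero => simp
    | succ k ih =>
      have hr : j * (k + 1) = j * k + j := by ring
      rw [pow_succ, ih, Finset.sum_range_succ, Nat.mul_add, hr, pow_add, pow_add]
      rw [mul_assoc, ← mul_assoc (c ^ (j * k)), hmix i (j * k)]
      simp only [mul_assoc]
  -- decomposition of closure elements
  have hdecomp : ∀ g ∈ Subgroup.closure ({c, d} : Set (Equiv.Perm F)),
      ∃ i j : ℕ, g = d ^ i * c ^ j := by
    intro g hg
    induction hg using Subgroup.closure_induction with
    | mem x hx =>
      rcases hx with hx | hx
      · exact ⟨0, 1, by simp [hx]⟩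
      · obtain rfl : x = d := hx
        exact ⟨1, 0, by simp⟩
    | one => exact ⟨0, 0, by simp⟩
    | mul x y hx hy ihx ihy =>
      obtain ⟨i, j, rfl⟩ := ihx
      obtain ⟨k, l, rfl⟩ := ihy
      refine ⟨i + k * p ^ j, j + l, ?_⟩
      rw [mul_assoc, ← mul_assoc (c ^ j) (d ^ k) (c ^ l), hmix k j,
        pow_add, pow_add, Nat.mul_comm k (p ^ j)]
      group
    | inv x hx ihx =>
      obtain ⟨i, j, rfl⟩ := ihx
      refine ⟨i * (n - 1) * p ^ (j * (e - 1)), j * (e - 1), ?_⟩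
      symm
      apply eq_inv_of_mul_eq_one_left
      have e1 : i * (n - 1) * p ^ (j * (e - 1)) + i * p ^ (j * (e - 1))
          = (i * p ^ (j * (e - 1))) * n := by
        have : n - 1 + 1 = n := by omega
        calc i * (n - 1) * p ^ (j * (e - 1)) + i * p ^ (j * (e - 1))
            = (i * p ^ (j * (e - 1))) * ((n - 1) + 1) := by ring
          _ = (i * p ^ (j * (e - 1))) * n := by rw [this]
      have e2 : j * (e - 1) + j = j * e := by
        have : e - 1 + 1 = e := by omega
        calc j * (e - 1) + j = j * ((e - 1) + 1) := by ring
          _ = j * e := by rw [this]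
      calc d ^ (i * (n - 1) * p ^ (j * (e - 1))) * c ^ (j * (e - 1)) * (d ^ i * c ^ j)
          = d ^ (i * (n - 1) * p ^ (j * (e - 1))) * (c ^ (j * (e - 1)) * d ^ i) * c ^ j := by
            simp only [mul_assoc]
        _ = d ^ (i * (n - 1) * p ^ (j * (e - 1))) * (d ^ (i * p ^ (j * (e - 1))) * c ^ (j * (e - 1))) * c ^ j := by
            rw [hmix i (j * (e - 1))]
        _ = (d ^ (i * (n - 1) * p ^ (j * (e - 1))) * d ^ (i * p ^ (j * (e - 1)))) * (c ^ (j * (e - 1)) * c ^ j) := by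
            simp only [mul_assoc]
        _ = d ^ (i * (n - 1) * p ^ (j * (e - 1)) + i * p ^ (j * (e - 1))) * c ^ (j * (e - 1) + j) := by
            rw [pow_add, pow_add]
        _ = 1 := by
            rw [e1, e2, Nat.mul_comm (i * p ^ (j * (e - 1))) n, pow_mul, hdn,
              one_pow, Nat.mul_comm j e, pow_mul, hce, one_pow, one_mul]
  intro g hg hgn
  obtain ⟨i, j, rfl⟩ := hdecomp g hg
  -- show e ∣ j
  have hej : e ∣ j := by
    by_contra hej
    set j' := Nat.gcd e j with hj'def
    have hj'pos : 0 < j' := Nat.gcd_pos_of_pos_left j (by omega)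
    obtain ⟨m, hme⟩ : j' ∣ e := Nat.gcd_dvd_left e j
    obtain ⟨u, hju⟩ : j' ∣ j := Nat.gcd_dvd_right e j
    have hmpos : 0 < m := by
      rcases Nat.eq_zero_or_pos m with h | h
      · exfalso; rw [h, Nat.mul_zero] at hme; omega
      · exact h
    have hm2 : 2 ≤ m := by
      by_contra h
      have hm1 : m = 1 := by omega
      apply hej
      rw [hm1, Nat.mul_one] at hme
      exact ⟨u, by rw [hme]; exact hju⟩
    have hcop : Nat.Coprime u m := by
      have h1 : Nat.gcd (j' * m) (j' * u) = j' * Nat.gcd m u := Nat.gcd_mul_left j' m u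
      rw [← hme, ← hju] at h1
      have h2 : j' = j' * Nat.gcd m u := by rw [← h1]
      have : Nat.gcd m u = 1 := by
        have h3 : j' * Nat.gcd m u = j' * 1 := by rw [Nat.mul_one, ← h2]
        exact Nat.eq_of_mul_eq_mul_left hj'pos h3
      exact Nat.coprime_comm.mp this
    set Nsum := ∑ l ∈ range m, p ^ (j * l) with hNdef
    set Msum := ∑ l ∈ range m, p ^ (j' * l) with hMdef
    -- g^m = d^(i * Nsum)
    have hgm : (d ^ i * c ^ j) ^ m = d ^ (i * Nsum) := by
      rw [hform]
      have : j * m = e * u := by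
        rw [hju, hme]; ring
      rw [this, pow_mul c e u, hce, one_pow, mul_one]
    -- order computations
    have h1 : orderOf ((d ^ i * c ^ j) ^ m) = n / Nat.gcd n m := by
      rw [orderOf_pow, hgn]
    have h2 : orderOf (d ^ (i * Nsum)) = n / Nat.gcd n (i * Nsum) := by
      rw [orderOf_pow, hdord]
    have hdiv_eq : n / Nat.gcd n m = n / Nat.gcd n (i * Nsum) := by
      rw [← h1, ← h2, hgm]
    have hgcd_eq : Nat.gcd n m = Nat.gcd n (i * Nsum) := by
      have d1 : Nat.gcd n m ∣ n := Nat.gcd_dvd_left n m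
      have d2 : Nat.gcd n (i * Nsum) ∣ n := Nat.gcd_dvd_left n (i * Nsum)
      calc Nat.gcd n m = n / (n / Nat.gcd n m) := (Nat.div_div_self d1 (by omega)).symm
        _ = n / (n / Nat.gcd n (i * Nsum)) := by rw [hdiv_eq]
        _ = Nat.gcd n (i * Nsum) := Nat.div_div_self d2 (by omega)
    -- congruence Nsum ≡ Msum mod n
    have hxe : (p : ZMod n) ^ e = 1 := by
      have h := hadm.1.2
      have := (ZMod.natCast_eq_natCast_iff (p ^ e) 1 n).mpr h
      push_cast at this
      exact this
    have hNM : (Nsum : ZMod n) = (Msum : ZMod n) := by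
      rw [hNdef, hMdef]
      push_cast
      have hy : ((p : ZMod n) ^ j') ^ m = 1 := by
        rw [← pow_mul, ← hme, hxe]
      calc ∑ l ∈ range m, (p : ZMod n) ^ (j * l)
          = ∑ l ∈ range m, ((p : ZMod n) ^ j') ^ (u * l) := by
            refine Finset.sum_congr rfl fun l _ => ?_
            rw [← pow_mul]
            congr 1
            rw [hju]; ring
        _ = ∑ l ∈ range m, ((p : ZMod n) ^ j') ^ l :=
            aux_sum_pow_coprime _ m u hm2 hy hcop
        _ = ∑ l ∈ range m, (p : ZMod n) ^ (j' * l) := by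
            refine Finset.sum_congr rfl fun l _ => ?_
            rw [← pow_mul]
    have hmodeq : i * Nsum ≡ i * Msum [MOD n] := by
      refine Nat.ModEq.mul_left i ?_
      exact (ZMod.natCast_eq_natCast_iff Nsum Msum n).mp hNM
    have hgcd2 : Nat.gcd n (i * Nsum) = Nat.gcd n (i * Msum) := by
      rw [Nat.gcd_rec n (i * Nsum), Nat.gcd_rec n (i * Msum), hmodeq]
    -- Msum divides n
    have hMdvdn : Msum ∣ n := by
      have hfac : (∑ k ∈ range e, p ^ k) = Msum * ∑ t ∈ range j', p ^ t := by
        rw [hMdef, ← aux_geom_factor p j' m, ← hme]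
      have hgeq : (p ^ e - 1) / (p - 1) = ∑ k ∈ range e, p ^ k := by
        have := aux_pred_mul_geom p e (by omega)
        rw [← this]
        exact Nat.mul_div_cancel_left _ (by omega)
      rw [hgeq, hfac] at hdvd
      exact dvd_trans (Dvd.intro _ rfl) hdvd
    have hMg : Msum ∣ Nat.gcd n m := by
      rw [hgcd_eq, hgcd2]
      exact Nat.dvd_gcd hMdvdn (dvd_mul_left Msum i)
    have hMle : Msum ≤ m :=
      Nat.le_of_dvd hmpos (hMg.trans (Nat.gcd_dvd_right n m))
    -- lower bound on Msum
    have hbig : m < Msum := by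
      have h2l : ∀ l ∈ range m, 2 ^ l ≤ p ^ (j' * l) := by
        intro l _
        calc 2 ^ l ≤ (p ^ j') ^ l := by
              refine Nat.pow_le_pow_left ?_ l
              calc 2 ≤ p := hp2
                _ = p ^ 1 := (pow_one p).symm
                _ ≤ p ^ j' := Nat.pow_le_pow_right (by omega) hj'pos
          _ = p ^ (j' * l) := by rw [← pow_mul]
      have hsum : (∑ l ∈ range m, 2 ^ l) ≤ Msum := Finset.sum_le_sum h2l
      have h2m : (∑ l ∈ range m, 2 ^ l) = 2 ^ m - 1 := by
        have := aux_pred_mul_geom 2 m (by omega)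
        simpa using this
      have := aux_two_pow m hm2
      omega
    omega
  obtain ⟨t, rfl⟩ := hej
  refine ⟨i, ?_⟩
  rw [pow_mul, hce, one_pow, mul_one]
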